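/- Fix positive integers k and n, and let x_1, ..., x_{k+1} be distinct primary domain types. Consider the monomer collection (the depth-k, redundancy-n translator cascade, without input) consisting of: for each i in {1, ..., k}, n copies of the two-domain monomer {x_i*, x_{i+1}} and n copies of the single-domain monomer {x_i}; one monomer consisting of n copies of x_{k+1}* ; and one terminator monomer consisting of n copies of x_{k+1}. Then there exists a saturated configuration α of this monomer collection in which the terminator monomer is not free (i.e., the configuration has output 0) and S(α) = nk + 1; namely, the configuration in which, for each i, each x_i* domain on a monomer {x_i*, x_{i+1}} is bound to a monomer {x_i}, and the n domains x_{k+1}* are bound to the n domains x_{k+1} of the terminator monomer. -/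

import Mathlib

/-- A monomer type over a set `D` of primary domain types: for each primary
domain type it records the number of instances of that domain and of its
complementary (starred) domain on the monomer. -/
structure Monomer (D : Type) where
  prim : D → ℕ
  star : D → ℕ

/-- Instances of primary domains in the monomer collection `mon : I → Monomer D`
(`I` indexes the individual monomers). -/
def PrimInst {D I : Type} (mon : I → Monomer D) : Type :=
  Σ i : I, Σ x : D, Fin ((mon i).prim x)

/-- Instances of complementary (starred) domains in the collection `mon`. -/
def StarInst {D I : Type} (mon : I → Monomer D) : Type :=
  Σ i : I, Σ x : D, Fin ((mon i).star x)

/-- A configuration of the monomer collection `mon`: a matching between primary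
domain instances and complementary domain instances of the same domain type. -/
structure Config {D I : Type} (mon : I → Monomer D) where
  bond : PrimInst mon → Option (StarInst mon)
  inj : ∀ p q s, bond p = some s → bond q = some s → p = q
  compat : ∀ p s, bond p = some s → p.2.1 = s.2.1

namespace Config

variable {D I : Type} {mon : I → Monomer D}

/-- A configuration is saturated if no primary domain instance of some type and
complementary instance of the same type are both unmatched. -/
def Saturated (α : Config mon) : Prop :=
  ¬ ∃ (p : PrimInst mon) (s : StarInst mon),
      p.2.1 = s.2.1 ∧ α.bond p = none ∧ ∀ q, α.bond q ≠ some s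

/-- The monomer binding graph: vertices are monomers, with an edge between two
(distinct) monomers that share at least one bound pair of domain instances.
Its connected components are the polymers of the configuration. -/
def bindingGraph (α : Config mon) : SimpleGraph I where
  Adj i j := i ≠ j ∧ ∃ p s, α.bond p = some s ∧
      ((p.1 = i ∧ s.1 = j) ∨ (p.1 = j ∧ s.1 = i))
  symm := by
    constructor
    rintro i j ⟨hne, p, s, hb, hor⟩
    exact ⟨hne.symm, p, s, hb, hor.symm⟩
  loopless := by
    constructor
    rintro i ⟨hne, -⟩
    exact hne rfl

/-- The entropy `S(α)`: the number of polymers (connected components). -/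
noncomputable def entropy (α : Config mon) : ℕ :=
  Nat.card α.bindingGraph.ConnectedComponent

/-- A configuration is stable if it is saturated and has maximal entropy among
all saturated configurations of the same monomer collection. -/
def IsStable (α : Config mon) : Prop :=
  α.Saturated ∧ ∀ β : Config mon, β.Saturated → β.entropy ≤ α.entropy

/-- The size of a polymer (connected component) `C`: the number of monomers in it. -/
noncomputable def polymerSize (α : Config mon) (C : α.bindingGraph.ConnectedComponent) : ℕ :=
  Nat.card {i : I // α.bindingGraph.connectedComponentMk i = C}

/-- A monomer is free if its polymer contains no other monomer. -/
def Free (α : Config mon) (i : I) : Prop :=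
  ∀ j : I, α.bindingGraph.Reachable i j → j = i

end Config

/-- The monomer matrix `M_T` applied to a count vector `c`: component `x` is the
number of instances of domain `x` minus the number of instances of `x*` in the
collection with `c j` copies of monomer type `Mty j`. -/
def matVec {D : Type} {m : ℕ} (Mty : Fin m → Monomer D) (c : Fin m → ℕ) (x : D) : ℤ :=
  ∑ j, (c j : ℤ) * (((Mty j).prim x : ℤ) - ((Mty j).star x : ℤ))

/-! The depth-`k`, redundancy-`n` translator cascade (without input).
Domain `(i : Fin (k+1))` represents the primary domain type `x_{i+1}`. -/

/-- The translator gate monomer `{x_i*, x_{i+1}}` of layer `i` (0-indexed). -/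
def gateMon (k : ℕ) (i : Fin k) : Monomer (Fin (k + 1)) where
  prim := fun x => if x = i.succ then 1 else 0
  star := fun x => if x = i.castSucc then 1 else 0

/-- The single-domain monomer `{x_i}` of layer `i` (0-indexed). -/
def singleMon (k : ℕ) (i : Fin k) : Monomer (Fin (k + 1)) where
  prim := fun x => if x = i.castSucc then 1 else 0
  star := fun _ => 0

/-- The monomer consisting of `n` copies of `x_{k+1}*`. -/
def collectorMon (k n : ℕ) : Monomer (Fin (k + 1)) where
  prim := fun _ => 0
  star := fun x => if x = Fin.last k then n else 0

/-- The terminator monomer consisting of `n` copies of `x_{k+1}`. -/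
def terminatorMon (k n : ℕ) : Monomer (Fin (k + 1)) where
  prim := fun x => if x = Fin.last k then n else 0
  star := fun _ => 0

/-- Index set of the cascade collection: for each layer `i ∈ {1,…,k}`, `n`
copies of the gate monomer `{x_i*, x_{i+1}}` and `n` copies of `{x_i}`, plus
one collector monomer `{n ⬝ x_{k+1}*}` and one terminator monomer
`{n ⬝ x_{k+1}}`. -/
def CascadeIdx (k n : ℕ) : Type := (Fin k × Fin n) ⊕ ((Fin k × Fin n) ⊕ (Unit ⊕ Unit))

/-- The translator-cascade monomer collection. -/
def cascadeMon (k n : ℕ) : CascadeIdx k n → Monomer (Fin (k + 1)) :=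
  Sum.elim (fun p => gateMon k p.1)
    (Sum.elim (fun p => singleMon k p.1)
      (Sum.elim (fun _ => collectorMon k n) (fun _ => terminatorMon k n)))

/-- The index of the terminator monomer. -/
def termIdx (k n : ℕ) : CascadeIdx k n := Sum.inr (Sum.inr (Sum.inr ()))

/-- The index of the collector monomer. -/
def collIdx (k n : ℕ) : CascadeIdx k n := Sum.inr (Sum.inr (Sum.inl ()))

/-- The intended bond function: the primary domain on each single monomer binds
to the star domain on the corresponding gate monomer, and the primary domains
on the terminator bind to the star domains on the collector. -/
def myBond (k n : ℕ) : PrimInst (cascadeMon k n) → Option (StarInst (cascadeMon k n)) :=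
  fun p => match p with
  | ⟨Sum.inl _, _, _⟩ => none
  | ⟨Sum.inr (Sum.inl q), x, m⟩ => some ⟨Sum.inl q, x, m⟩
  | ⟨Sum.inr (Sum.inr (Sum.inl _)), _, m⟩ => m.elim0
  | ⟨Sum.inr (Sum.inr (Sum.inr _)), x, m⟩ => some ⟨collIdx k n, x, m⟩

/-- Inverse of the bond function. -/
def myUnbond (k n : ℕ) : StarInst (cascadeMon k n) → Option (PrimInst (cascadeMon k n)) :=
  fun s => match s with
  | ⟨Sum.inl q, x, m⟩ => some ⟨Sum.inr (Sum.inl q), x, m⟩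
  | ⟨Sum.inr (Sum.inl _), _, m⟩ => m.elim0
  | ⟨Sum.inr (Sum.inr (Sum.inl _)), x, m⟩ => some ⟨termIdx k n, x, m⟩
  | ⟨Sum.inr (Sum.inr (Sum.inr _)), _, m⟩ => m.elim0

lemma myBond_unbond (k n : ℕ) :
    ∀ p s, myBond k n p = some s → myUnbond k n s = some p := by
  rintro ⟨(q | (q | (u | u))), x, m⟩ s h
  · exact nomatch (show (none : Option (StarInst (cascadeMon k n))) = some s from h)
  · obtain rfl := Option.some.inj h; rfl
  · exact m.elim0
  · obtain rfl := Option.some.inj h; cases u; rfl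

/-- The intended configuration. -/
def myConfig (k n : ℕ) : Config (cascadeMon k n) where
  bond := myBond k n
  inj := by
    intro p q s hp hq
    have h1 := myBond_unbond k n p s hp
    have h2 := myBond_unbond k n q s hq
    exact Option.some.inj (h1.symm.trans h2)
  compat := by
    rintro ⟨(q | (q | (u | u))), x, m⟩ s h
    · exact nomatch (show (none : Option (StarInst (cascadeMon k n))) = some s from h)
    · obtain rfl := Option.some.inj h; rfl
    · exact m.elim0
    · obtain rfl := Option.some.inj h; rfl

lemma walk_const {V : Type} {β : Type} {G : SimpleGraph V} (f : V → β)
    (hf : ∀ a b, G.Adj a b → f a = f b) :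
    ∀ {v w : V} (_ : G.Walk v w), f v = f w := by
  intro v w p
  induction p with
  | nil => rfl
  | cons h _ ih => exact (hf _ _ h).trans ih

/-- The depth-`k`, redundancy-`n` translator cascade without
input has a saturated configuration in which the terminator monomer is not
free (output `0`) and whose entropy is `nk + 1`. -/
theorem stmt8 (k n : ℕ) (hk : 0 < k) (hn : 0 < n) :
    ∃ α : Config (cascadeMon k n), α.Saturated ∧ ¬ α.Free (termIdx k n) ∧
      α.entropy = n * k + 1 := by
  set α := myConfig k n with hα
  set G := α.bindingGraph with hG
  -- the "label" of each monomer: its intended connected component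
  set f : CascadeIdx k n → ((Fin k × Fin n) ⊕ Unit) :=
    Sum.elim Sum.inl (Sum.elim Sum.inl fun _ => Sum.inr ()) with hf
  have hbond_f : ∀ p s, myBond k n p = some s → f p.1 = f s.1 := by
    rintro ⟨(q | (q | (u | u))), x, m⟩ s h
    · exact nomatch (show (none : Option (StarInst (cascadeMon k n))) = some s from h)
    · obtain rfl := Option.some.inj h; rfl
    · exact m.elim0
    · obtain rfl := Option.some.inj h; rfl
  have hAdj : ∀ a b, G.Adj a b → f a = f b := by
    rintro a b ⟨-, p, s, hb, (⟨rfl, rfl⟩ | ⟨rfl, rfl⟩)⟩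
    · exact hbond_f p s hb
    · exact (hbond_f p s hb).symm
  have adj_sg : ∀ q : Fin k × Fin n, G.Adj (Sum.inr (Sum.inl q)) (Sum.inl q) := by
    intro q
    refine ⟨(by intro h; cases h), ⟨Sum.inr (Sum.inl q), q.1.castSucc, ⟨0, ?_⟩⟩,
      ⟨Sum.inl q, q.1.castSucc, ⟨0, ?_⟩⟩, rfl, Or.inl ⟨rfl, rfl⟩⟩
    · simp [cascadeMon, singleMon]
    · simp [cascadeMon, gateMon]
  have adj_tc : G.Adj (termIdx k n) (collIdx k n) := by
    refine ⟨fun h => (by cases h), ⟨termIdx k n, Fin.last k, ⟨0, ?_⟩⟩,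
      ⟨collIdx k n, Fin.last k, ⟨0, ?_⟩⟩, rfl, Or.inl ⟨rfl, rfl⟩⟩
    · simpa [cascadeMon, termIdx, terminatorMon] using hn
    · simpa [cascadeMon, collIdx, collectorMon] using hn
  refine ⟨α, ?_, ?_, ?_⟩
  · -- saturated
    rintro ⟨p, ⟨(q | (q | (u | u))), x, m⟩, hdom, hnone, hall⟩
    · exact hall ⟨Sum.inr (Sum.inl q), x, m⟩ rfl
    · exact m.elim0
    · cases u; exact hall ⟨termIdx k n, x, m⟩ rfl
    · exact m.elim0
  · -- terminator not free
    intro hF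
    have := hF (collIdx k n) adj_tc.reachable
    cases this
  · -- entropy
    let g : G.ConnectedComponent → ((Fin k × Fin n) ⊕ Unit) :=
      SimpleGraph.ConnectedComponent.lift f (fun v w p _ => walk_const f hAdj p)
    let rep : ((Fin k × Fin n) ⊕ Unit) → CascadeIdx k n :=
      Sum.elim Sum.inl (fun _ => termIdx k n)
    have e : G.ConnectedComponent ≃ ((Fin k × Fin n) ⊕ Unit) := by
      refine ⟨g, fun t => G.connectedComponentMk (rep t), ?_, ?_⟩
      · refine SimpleGraph.ConnectedComponent.ind ?_
        rintro ((q) | (q | (u | u)))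
        · rfl
        · exact SimpleGraph.ConnectedComponent.sound (adj_sg q).symm.reachable
        · cases u; exact SimpleGraph.ConnectedComponent.sound adj_tc.reachable
        · cases u; rfl
      · rintro (q | u)
        · rfl
        · cases u; rfl
    show Nat.card G.ConnectedComponent = n * k + 1
    rw [Nat.card_congr e]
    simp [Nat.card_eq_fintype_card, mul_comm]
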